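/- Let 𝕊 be an LTS with countable label set L and let s ∈ S. Define φ_0 = ⊤, φ_{α+1} = ⋁_{a∈L} ⟨a⟩φ_α, and φ_λ = ⋀_{α<λ} φ_α for limit λ. Then (𝕊, s) ⊨ φ_α if and only if (Tr_𝕊(s), {→^⋆}) with root ∅ satisfies ψ_α, where ψ_0 = ⊤, ψ_{α+1} = ◇ψ_α, ψ_λ = ⋀_{α<λ}ψ_α, and Tr_𝕊(s) is the ω-expansion tree at s with immediate-successor transition. -/

import Mathlib

/-- `B` is a bisimulation between labelled transition systems. -/
def IsLBisim {S S' L : Type} (R : L → S → S → Prop) (R' : L → S' → S' → Prop)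
    (B : S → S' → Prop) : Prop :=
  ∀ s s', B s s' → ∀ a : L,
    (∀ t, R a s t → ∃ t', R' a s' t' ∧ B t t') ∧
    (∀ t', R' a s' t' → ∃ t, R a s t ∧ B t t')

/-- Bisimilarity of pointed labelled transition systems. -/
def LBisimilar {S S' L : Type} (R : L → S → S → Prop) (R' : L → S' → S' → Prop)
    (s : S) (s' : S') : Prop :=
  ∃ B, IsLBisim R R' B ∧ B s s'

/-- `ω`-indexed paths from `s`: `u = (s₁,a₁,n₁)⋯(s_m,a_m,n_m)` with
`s →^{a₁} s₁` and `s_i →^{a_{i+1}} s_{i+1}`. -/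
def IsPath {S L : Type} (R : L → S → S → Prop) : S → List (S × L × ℕ) → Prop
  | _, [] => True
  | s, (t, a, _) :: rest => R a s t ∧ IsPath R t rest

/-- The `ω`-expansion tree `Tr_𝕊(s)` of all `ω`-indexed paths from `s`. -/
def ExpTree {S L : Type} (R : L → S → S → Prop) (s : S) : Set (List (S × L × ℕ)) :=
  {u | IsPath R s u}

/-- The successor relations `Suc^a` on a tree over `S × L × ℕ`:
`u Suc^a v` iff `v = u ⌢ (t,a,n)`. -/
def SucRel {S L : Type} (a : L) (u v : List (S × L × ℕ)) : Prop :=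
  ∃ (t : S) (n : ℕ), v = u ++ [(t, a, n)]

/-- Satisfaction of the formulas `φ_α` (`φ_0 = ⊤`, `φ_{α+1} = ⋁_{a∈L} ⟨a⟩φ_α`,
`φ_λ = ⋀_{β<λ} φ_β`) on a labelled transition system. -/
noncomputable def SatPhi {S L : Type} (R : L → S → S → Prop) (α : Ordinal) : S → Prop :=
  Ordinal.limitRecOn α (fun _ => True)
    (fun _ ih s => ∃ (a : L) (t : S), R a s t ∧ ih t)
    (fun o _ ih s => ∀ β (hβ : β < o), ih β hβ s)


/-- Satisfaction of the formulas `ψ_α` (`ψ_0 = ⊤`, `ψ_{α+1} = ◇ψ_α`,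
`ψ_λ = ⋀_{β<λ} ψ_β`) on a tree viewed as a transition system via immediate
successors. -/
noncomputable def SatPsi {N : Type} (T : Set (List N)) (α : Ordinal) : List N → Prop :=
  Ordinal.limitRecOn α (fun _ => True)
    (fun _ ih s => ∃ n : N, s ++ [n] ∈ T ∧ ih (s ++ [n]))
    (fun o _ ih s => ∀ β (hβ : β < o), ih β hβ s)


private def endState {S L : Type} (s : S) (u : List (S × L × ℕ)) : S :=
  u.foldl (fun _ x => x.1) s

private lemma endState_append {S L : Type} (s : S) (u : List (S × L × ℕ)) (x) :
    endState s (u ++ [x]) = x.1 := by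
  simp [endState, List.foldl_append]

private lemma isPath_append {S L : Type} (R : L → S → S → Prop) :
    ∀ (u : List (S × L × ℕ)) (s : S) (t : S) (a : L) (n : ℕ),
    IsPath R s (u ++ [(t, a, n)]) ↔ IsPath R s u ∧ R a (endState s u) t := by
  intro u
  induction u with
  | nil => intro s t a n; simp [IsPath, endState]
  | cons x rest ih =>
    intro s t a n
    obtain ⟨t', a', n'⟩ := x
    simp only [List.cons_append, IsPath, List.append_eq]
    rw [ih t' t a n]
    simp only [endState, List.foldl_cons]
    tauto

private lemma satPhi_key {S L : Type} (R : L → S → S → Prop) (s : S) (α : Ordinal) :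
    ∀ u : List (S × L × ℕ), IsPath R s u →
      (SatPhi R α (endState s u) ↔ SatPsi (ExpTree R s) α u) := by
  induction α using Ordinal.limitRecOn with
  | zero => intro u _; simp [SatPhi, SatPsi, Ordinal.limitRecOn_zero]
  | add_one o ih =>
    intro u hu
    simp only [SatPhi, SatPsi, Ordinal.limitRecOn_add_one]
    constructor
    · rintro ⟨a, t, hR, hphi⟩
      refine ⟨(t, a, 0), ?_, ?_⟩
      · exact (isPath_append R u s t a 0).2 ⟨hu, hR⟩
      · have h2 : IsPath R s (u ++ [(t, a, 0)]) := (isPath_append R u s t a 0).2 ⟨hu, hR⟩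
        have := ih (u ++ [(t, a, 0)]) h2
        rw [endState_append] at this
        exact this.1 hphi
    · rintro ⟨⟨t, a, n⟩, hmem, hpsi⟩
      have h2 : IsPath R s (u ++ [(t, a, n)]) := hmem
      obtain ⟨_, hR⟩ := (isPath_append R u s t a n).1 h2
      refine ⟨a, t, hR, ?_⟩
      have := ih (u ++ [(t, a, n)]) h2
      rw [endState_append] at this
      exact this.2 hpsi
  | limit o ho ih =>
    intro u hu
    simp only [SatPhi, SatPsi, Ordinal.limitRecOn_limit _ _ _ _ ho]
    exact forall_congr' fun β => forall_congr' fun hβ => by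
      have := ih β hβ u hu
      simpa [SatPhi, SatPsi] using this

/-- `(𝕊, s) ⊨ φ_α` iff the `ω`-expansion tree `Tr_𝕊(s)`, viewed
as a transition system with the immediate-successor relation and root `∅`,
satisfies `ψ_α`. -/
theorem satPhi_iff_satPsi_expansion {S L : Type} [Countable L]
    (R : L → S → S → Prop) (s : S) (α : Ordinal) :
    SatPhi R α s ↔ SatPsi (ExpTree R s) α [] := by
  simpa [endState] using satPhi_key R s α [] trivial
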